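/- arXiv:1312.3173 — 3 statements merged into one kernel-verified Lean document; each statement's English description precedes it below -/
import Mathlib

section
/- Suppose A, B ∈ U(2,1) can be written as A = S₁·conj(S₂) and B = S₂·conj(S₃) for matrices S₁, S₂, S₃ ∈ U(2,1) each satisfying Sᵢ·conj(Sᵢ) = I (lifts of real reflections). Then the commutator A·B·A⁻¹·B⁻¹ has real trace. -/
open Matrix

private lemma trace_map_conj (M : Matrix (Fin 3) (Fin 3) ℂ) :
    (M.map (starRingEnd ℂ)).trace = (starRingEnd ℂ) M.trace := by
  simp [Matrix.trace, Matrix.diag, map_sum]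

private lemma map_conj_conj (M : Matrix (Fin 3) (Fin 3) ℂ) :
    (M.map (starRingEnd ℂ)).map (starRingEnd ℂ) = M := by
  ext i j; simp

/-- If `A = S₁ conj(S₂)`, `B = S₂ conj(S₃)` with each `Sᵢ ∈ U(2,1)` satisfying
`Sᵢ conj(Sᵢ) = 1` (lifts of real reflections), then `[A,B] = A B A⁻¹ B⁻¹` has real trace. -/
theorem commutator_real_trace_of_decomposition
    (H A B S₁ S₂ S₃ : Matrix (Fin 3) (Fin 3) ℂ)
    (hH : H = !![1, 0, 0; 0, 1, 0; 0, 0, -1])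
    (hU1 : S₁ᴴ * H * S₁ = H) (hU2 : S₂ᴴ * H * S₂ = H) (hU3 : S₃ᴴ * H * S₃ = H)
    (hs1 : S₁ * S₁.map (starRingEnd ℂ) = 1)
    (hs2 : S₂ * S₂.map (starRingEnd ℂ) = 1)
    (hs3 : S₃ * S₃.map (starRingEnd ℂ) = 1)
    (hA : A = S₁ * S₂.map (starRingEnd ℂ))
    (hB : B = S₂ * S₃.map (starRingEnd ℂ)) :
    ((A * B * A⁻¹ * B⁻¹).trace).im = 0 := by
  set σ := starRingEnd ℂ with hσ
  -- inverses
  have hA' : A⁻¹ = S₂ * S₁.map σ := by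
    apply Matrix.inv_eq_right_inv
    rw [hA]
    have h2 : S₂.map σ * S₂ = 1 := mul_eq_one_comm.mp hs2
    calc S₁ * S₂.map σ * (S₂ * S₁.map σ)
        = S₁ * (S₂.map σ * S₂) * S₁.map σ := by simp [Matrix.mul_assoc]
      _ = 1 := by rw [h2, Matrix.mul_one, hs1]
  have hB' : B⁻¹ = S₃ * S₂.map σ := by
    apply Matrix.inv_eq_right_inv
    rw [hB]
    have h3 : S₃.map σ * S₃ = 1 := mul_eq_one_comm.mp hs3
    calc S₂ * S₃.map σ * (S₃ * S₂.map σ)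
        = S₂ * (S₃.map σ * S₃) * S₂.map σ := by simp [Matrix.mul_assoc]
      _ = 1 := by rw [h3, Matrix.mul_one, hs2]
  set P : Matrix (Fin 3) (Fin 3) ℂ := S₁ * S₃.map σ * S₂ with hP
  have hC : A * B * A⁻¹ * B⁻¹ = P * P.map σ := by
    rw [hA', hB', hA, hB, hP]
    have h2 : S₂.map σ * S₂ = 1 := mul_eq_one_comm.mp hs2
    have hPm : (S₁ * S₃.map σ * S₂).map σ = S₁.map σ * S₃ * S₂.map σ := by
      rw [Matrix.map_mul, Matrix.map_mul, map_conj_conj]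
    rw [hPm]
    calc S₁ * S₂.map σ * (S₂ * S₃.map σ) * (S₂ * S₁.map σ) * (S₃ * S₂.map σ)
        = S₁ * (S₂.map σ * S₂) * S₃.map σ * S₂ * (S₁.map σ * S₃ * S₂.map σ) := by
          simp [Matrix.mul_assoc]
      _ = S₁ * S₃.map σ * S₂ * (S₁.map σ * S₃ * S₂.map σ) := by
          rw [h2, Matrix.mul_one]
  rw [hC]
  have key : σ ((P * P.map σ).trace) = (P * P.map σ).trace := by
    calc σ ((P * P.map σ).trace) = ((P * P.map σ).map σ).trace := (trace_map_conj _).symm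
      _ = (P.map σ * P).trace := by rw [Matrix.map_mul, map_conj_conj]
      _ = (P * P.map σ).trace := Matrix.trace_mul_comm _ _
  exact Complex.conj_eq_iff_im.mp key
end

section
/- Let A, B ∈ U(2,1), and let P₁ ∈ ℂ³ be an eigenvector of the commutator [A,B] = ABA⁻¹B⁻¹ with eigenvalue λ₁. Set P₂ = B⁻¹P₁, P₃ = A⁻¹P₂, P₄ = B P₃. Assume ⟨P₃,P₂⟩ ≠ 0 and ⟨P₁,P₄⟩ ≠ 0. Then (⟨P₁,P₂⟩⟨P₃,P₄⟩)/(⟨P₃,P₂⟩⟨P₁,P₄⟩) = λ₁⁻¹ · |⟨P₃,P₄⟩|²/|⟨P₃,P₂⟩|². In particular this cross-ratio is real and positive if and only if λ₁ is real and positive. -/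
open Matrix

/-- The Hermitian form of signature (2,1) on `ℂ³`: `⟨P,Q⟩ = ∑ H i j · P i · conj (Q j)`. -/
noncomputable def herm (H : Matrix (Fin 3) (Fin 3) ℂ) (P Q : Fin 3 → ℂ) : ℂ :=
  ∑ i, ∑ j, H i j * P i * (starRingEnd ℂ) (Q j)

lemma herm_eq (H : Matrix (Fin 3) (Fin 3) ℂ) (P Q : Fin 3 → ℂ) :
    herm H P Q = (P ᵥ* H) ⬝ᵥ star Q := by
  simp [herm, dotProduct, Matrix.vecMul, Fin.sum_univ_three, Finset.sum_mul]
  ring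

lemma herm_mulVec (H M : Matrix (Fin 3) (Fin 3) ℂ) (hs : Hᵀ = H)
    (hM : Mᴴ * H * M = H) (P Q : Fin 3 → ℂ) :
    herm H (M.mulVec P) (M.mulVec Q) = herm H P Q := by
  have key : Mᵀ * H * Mᴴᵀ = H := by
    have := congrArg Matrix.transpose hM
    simpa [Matrix.transpose_mul, hs, Matrix.mul_assoc] using this
  rw [herm_eq, herm_eq, Matrix.star_mulVec, ← Matrix.vecMul_transpose M P,
    Matrix.vecMul_vecMul, ← Matrix.mulVec_transpose Mᴴ,
    Matrix.dotProduct_mulVec, Matrix.vecMul_vecMul, key]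

lemma herm_conj (H : Matrix (Fin 3) (Fin 3) ℂ)
    (hH : H = !![1, 0, 0; 0, 1, 0; 0, 0, -1]) (P Q : Fin 3 → ℂ) :
    (starRingEnd ℂ) (herm H P Q) = herm H Q P := by
  subst hH
  simp [herm, Fin.sum_univ_three, Matrix.vecHead, Matrix.vecTail, map_add, _root_.map_mul, map_neg]
  ring

lemma herm_smul_right (H : Matrix (Fin 3) (Fin 3) ℂ) (c : ℂ) (P Q : Fin 3 → ℂ) :
    herm H P (c • Q) = (starRingEnd ℂ) c * herm H P Q := by
  simp only [herm, Pi.smul_apply, smul_eq_mul, _root_.map_mul, Finset.mul_sum]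
  congr 1; ext i; congr 1; ext j; ring


/-- For `A, B ∈ U(2,1)` and an eigenvector `P₁` of `[A,B]` with eigenvalue `λ₁`, setting
`P₂ = B⁻¹P₁`, `P₃ = A⁻¹P₂`, `P₄ = B P₃`, one has
`⟨P₁,P₂⟩⟨P₃,P₄⟩ / (⟨P₃,P₂⟩⟨P₁,P₄⟩) = λ₁⁻¹ |⟨P₃,P₄⟩|²/|⟨P₃,P₂⟩|²`; in particular this
cross-ratio is real and positive iff `λ₁` is real and positive. -/
theorem commutator_eigenvalue_crossratio (H A B : Matrix (Fin 3) (Fin 3) ℂ)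
    (hH : H = !![1, 0, 0; 0, 1, 0; 0, 0, -1])
    (hA : Aᴴ * H * A = H) (hB : Bᴴ * H * B = H)
    (P₁ : Fin 3 → ℂ) (hP₁ : P₁ ≠ 0) (l₁ : ℂ) (hl₁ : l₁ ≠ 0)
    (heig : (A * B * A⁻¹ * B⁻¹).mulVec P₁ = l₁ • P₁)
    (P₂ P₃ P₄ : Fin 3 → ℂ)
    (hP₂ : P₂ = B⁻¹.mulVec P₁) (hP₃ : P₃ = A⁻¹.mulVec P₂) (hP₄ : P₄ = B.mulVec P₃)
    (h32 : herm H P₃ P₂ ≠ 0) (h14 : herm H P₁ P₄ ≠ 0) (h34 : herm H P₃ P₄ ≠ 0) :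
    herm H P₁ P₂ * herm H P₃ P₄ / (herm H P₃ P₂ * herm H P₁ P₄) =
        l₁⁻¹ * ((‖herm H P₃ P₄‖ : ℂ) ^ 2 /
          (‖herm H P₃ P₂‖ : ℂ) ^ 2) ∧
    ((herm H P₁ P₂ * herm H P₃ P₄ / (herm H P₃ P₂ * herm H P₁ P₄)).im = 0 ∧
        0 < (herm H P₁ P₂ * herm H P₃ P₄ / (herm H P₃ P₂ * herm H P₁ P₄)).re ↔
      l₁.im = 0 ∧ 0 < l₁.re) := by
  have hs : Hᵀ = H := by
    subst hH; ext i j; fin_cases i <;> fin_cases j <;> rfl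
  have hdetH : H.det ≠ 0 := by subst hH; simp [Matrix.det_fin_three]
  have hAdet : IsUnit A.det := by
    rw [isUnit_iff_ne_zero]; intro h
    exact hdetH (by rw [← hA, Matrix.det_mul, Matrix.det_mul, h, mul_zero])
  have hBdet : IsUnit B.det := by
    rw [isUnit_iff_ne_zero]; intro h
    exact hdetH (by rw [← hB, Matrix.det_mul, Matrix.det_mul, h, mul_zero])
  have hBP₂ : B.mulVec P₂ = P₁ := by
    rw [hP₂, Matrix.mulVec_mulVec, Matrix.mul_nonsing_inv _ hBdet, Matrix.one_mulVec]
  have hAP₃ : A.mulVec P₃ = P₂ := by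
    rw [hP₃, Matrix.mulVec_mulVec, Matrix.mul_nonsing_inv _ hAdet, Matrix.one_mulVec]
  have hAP₄ : A.mulVec P₄ = l₁ • P₁ := by
    rw [hP₄, hP₃, hP₂, Matrix.mulVec_mulVec, Matrix.mulVec_mulVec, Matrix.mulVec_mulVec,
      ← heig]
  have e1 : herm H P₁ P₄ = herm H P₂ P₃ := by
    rw [← hBP₂, hP₄]; exact herm_mulVec H B hs hB P₂ P₃
  have e2 : herm H P₃ P₄ = (starRingEnd ℂ) l₁ * herm H P₂ P₁ := by
    rw [← herm_mulVec H A hs hA P₃ P₄, hAP₃, hAP₄, herm_smul_right]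
  have e3 : herm H P₂ P₃ = (starRingEnd ℂ) (herm H P₃ P₂) := (herm_conj H hH P₃ P₂).symm
  have e4 : herm H P₂ P₁ = (starRingEnd ℂ) (herm H P₁ P₂) := (herm_conj H hH P₁ P₂).symm
  set a := herm H P₃ P₄ with ha_def
  set b := herm H P₃ P₂ with hb_def
  have e5 : herm H P₁ P₂ = l₁⁻¹ * (starRingEnd ℂ) a := by
    have h6 : (starRingEnd ℂ) a = l₁ * herm H P₁ P₂ := by
      rw [e2, e4, _root_.map_mul, Complex.conj_conj, Complex.conj_conj]
    rw [h6]; field_simp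
  have e14 : herm H P₁ P₄ = (starRingEnd ℂ) b := by rw [e1, e3]
  have habs_a : ((‖a‖ : ℝ) : ℂ) ^ 2 = a * (starRingEnd ℂ) a := by
    rw [← Complex.ofReal_pow, Complex.sq_norm, Complex.mul_conj]
  have habs_b : ((‖b‖ : ℝ) : ℂ) ^ 2 = b * (starRingEnd ℂ) b := by
    rw [← Complex.ofReal_pow, Complex.sq_norm, Complex.mul_conj]
  have hcb : (starRingEnd ℂ) b ≠ 0 := by simpa using h32
  have main : herm H P₁ P₂ * a / (b * herm H P₁ P₄) =
      l₁⁻¹ * (((‖a‖ : ℝ) : ℂ) ^ 2 / ((‖b‖ : ℝ) : ℂ) ^ 2) := by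
    rw [e5, e14, habs_a, habs_b]
    field_simp
  refine ⟨main, ?_⟩
  rw [main]
  set r : ℝ := ‖a‖ ^ 2 / ‖b‖ ^ 2 with hr_def
  have hr_pos : 0 < r := div_pos (pow_pos (norm_pos_iff.mpr h34) 2)
    (pow_pos (norm_pos_iff.mpr h32) 2)
  have hcast : (((‖a‖ : ℝ) : ℂ) ^ 2 / ((‖b‖ : ℝ) : ℂ) ^ 2) = ((r : ℝ) : ℂ) := by
    rw [hr_def]; push_cast; ring
  rw [hcast]
  have him : (l₁⁻¹ * ((r : ℝ) : ℂ)).im = l₁⁻¹.im * r := by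
    simp [Complex.mul_im]
  have hre : (l₁⁻¹ * ((r : ℝ) : ℂ)).re = l₁⁻¹.re * r := by
    simp [Complex.mul_re]
  rw [him, hre, Complex.inv_im, Complex.inv_re]
  have hns : 0 < Complex.normSq l₁ := Complex.normSq_pos.mpr hl₁
  constructor
  · rintro ⟨h1, h2⟩
    constructor
    · have : -l₁.im / Complex.normSq l₁ = 0 := by
        rcases mul_eq_zero.mp h1 with h | h
        · exact h
        · exact absurd h (ne_of_gt hr_pos)
      field_simp at this
      linarith
    · have h3 : 0 < l₁.re / Complex.normSq l₁ := by
        by_contra h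
        push_neg at h
        nlinarith
      have h4 := mul_pos h3 hns
      rwa [div_mul_cancel₀ _ (ne_of_gt hns)] at h4
  · rintro ⟨h1, h2⟩
    refine ⟨by rw [h1]; ring, ?_⟩
    exact mul_pos (div_pos h2 hns) hr_pos
end

section
/- For A ∈ SU(2,1), define f(z) = |z|⁴ − 8 Re(z³) + 18|z|² − 27 with z = Tr(A). Then f(Tr A) equals the resultant of the characteristic polynomial χ_A(X) = X³ − z X² + conj(z) X − 1 and its derivative χ_A'(X). In particular, A has a repeated eigenvalue if and only if f(Tr A) = 0. -/
open Matrix Polynomial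

/-- The Sylvester matrix of `χ_A(X) = X³ − z X² + conj(z) X − 1` and its derivative
`χ_A'(X) = 3X² − 2z X + conj(z)`. -/
noncomputable def sylv (z : ℂ) : Matrix (Fin 5) (Fin 5) ℂ :=
  !![1, -z, (starRingEnd ℂ) z, -1, 0;
     0, 1, -z, (starRingEnd ℂ) z, -1;
     3, -2 * z, (starRingEnd ℂ) z, 0, 0;
     0, 3, -2 * z, (starRingEnd ℂ) z, 0;
     0, 0, 3, -2 * z, (starRingEnd ℂ) z]

lemma sylv_det (z : ℂ) : (sylv z).det =
    27 + 4 * (starRingEnd ℂ) z ^ 3 - 18 * z * (starRingEnd ℂ) z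
      - z ^ 2 * (starRingEnd ℂ) z ^ 2 + 4 * z ^ 3 := by
  simp (config := { decide := true }) [sylv, Matrix.det_succ_row_zero, Fin.sum_univ_succ,
    Matrix.det_fin_three, Fin.succAbove, Fin.castSucc, Fin.castAdd, Fin.castLE]
  ring

lemma charpoly_fin_three' (M : Matrix (Fin 3) (Fin 3) ℂ) :
    M.charpoly = X ^ 3 - C M.trace * X ^ 2 + C M.adjugate.trace * X - C M.det := by
  rw [Matrix.charpoly, Matrix.det_fin_three, Matrix.trace_fin_three,
    Matrix.adjugate_fin_three, Matrix.trace_fin_three, Matrix.det_fin_three]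
  simp [charmatrix_apply_eq, charmatrix_apply_ne, Fin.ext_iff]
  ring

/-- Goldman's function `f(z) = |z|⁴ − 8 Re(z³) + 18|z|² − 27` at `z = Tr A` equals (with the
standard normalization `(−1)^{n(n−1)/2}`) the resultant of `χ_A` and `χ_A'`; in particular
`A ∈ SU(2,1)` has a repeated eigenvalue iff `f(Tr A) = 0`. -/
theorem goldman_function_resultant (H A : Matrix (Fin 3) (Fin 3) ℂ)
    (hH : H = !![1, 0, 0; 0, 1, 0; 0, 0, -1])
    (hdet : A.det = 1) (hA : Aᴴ * H * A = H) :
    ((‖A.trace‖ ^ 4 - 8 * (A.trace ^ 3).re + 18 * ‖A.trace‖ ^ 2 - 27 : ℝ) : ℂ)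
        = (-1 : ℂ) ^ (3 * (3 - 1) / 2) * (sylv A.trace).det ∧
    ((∃ μ : ℂ, 1 < A.charpoly.roots.count μ) ↔
      ‖A.trace‖ ^ 4 - 8 * (A.trace ^ 3).re + 18 * ‖A.trace‖ ^ 2 - 27 = 0) := by
  set z := A.trace with hz
  set w := (starRingEnd ℂ) z with hwdef
  -- adjugate A = H * Aᴴ * H
  have hHH : H * H = 1 := by subst hH; simp [Matrix.mul_fin_three, ← Matrix.one_fin_three]
  have hBA : (H * Aᴴ * H) * A = 1 := by
    calc (H * Aᴴ * H) * A = H * (Aᴴ * H * A) := by noncomm_ring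
    _ = 1 := by rw [hA, hHH]
  have hadj : A.adjugate = H * Aᴴ * H := by
    have hAB : A * A.adjugate = 1 := by rw [Matrix.mul_adjugate, hdet]; simp
    calc A.adjugate = ((H * Aᴴ * H) * A) * A.adjugate := by rw [hBA, one_mul]
    _ = (H * Aᴴ * H) * (A * A.adjugate) := by noncomm_ring
    _ = H * Aᴴ * H := by rw [hAB, mul_one]
  -- trace of adjugate is conj trace
  have htr : A.adjugate.trace = w := by
    rw [hadj, hwdef, hz, hH, Matrix.trace_fin_three, Matrix.trace_fin_three]
    simp [Matrix.mul_apply, Matrix.vecMul, dotProduct, Fin.sum_univ_succ,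
      Matrix.conjTranspose_apply]
  -- charpoly
  have hcp : A.charpoly = X ^ 3 - C z * X ^ 2 + C w * X - 1 := by
    rw [charpoly_fin_three', htr, hdet, hz]; simp
  -- the cubic
  set P : Cubic ℂ := ⟨1, -z, w, -1⟩ with hP
  have hPtoPoly : P.toPoly = A.charpoly := by
    rw [hcp, Cubic.toPoly]; simp [hP]; ring
  have ha : P.a ≠ 0 := one_ne_zero
  -- part 1
  have habs : ((‖z‖ : ℝ) : ℂ) ^ 2 = z * w := by
    rw [hwdef, Complex.mul_conj, ← Complex.sq_norm]; push_cast; ring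
  have hre : (((z ^ 3).re : ℝ) : ℂ) = (z ^ 3 + w ^ 3) / 2 := by
    rw [hwdef, ← map_pow]
    have := Complex.add_conj (z ^ 3)
    rw [this]; push_cast; ring
  have hdisc : ((‖z‖ ^ 4 - 8 * (z ^ 3).re + 18 * ‖z‖ ^ 2 - 27 : ℝ) : ℂ)
      = - (sylv z).det := by
    rw [sylv_det]
    push_cast
    linear_combination ((((‖z‖ : ℝ)):ℂ)^2 + z*w + 18) * habs - 8 * hre
  have hPdisc : P.discr = - (sylv z).det := by
    rw [sylv_det, Cubic.discr, hP]; ring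
  constructor
  · rw [hdisc]; norm_num
  -- part 2
  have hsplits : Splits (P.toPoly.map (RingHom.id ℂ)) := IsAlgClosed.splits _
  have hmapP : Cubic.map (RingHom.id ℂ) P = P := by
    rw [Cubic.map]; simp
  obtain ⟨x, y, u, h3⟩ := (Cubic.splits_iff_roots_eq_three ha).mp hsplits
  have hroots : A.charpoly.roots = {x, y, u} := by
    rw [← hPtoPoly, ← Cubic.roots, ← hmapP]; exact h3
  have hnodup := Cubic.discr_ne_zero_iff_roots_nodup ha hsplits
  rw [hmapP, Cubic.roots, hPtoPoly] at hnodup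
  have hcount : (∃ μ : ℂ, 1 < A.charpoly.roots.count μ) ↔ ¬ A.charpoly.roots.Nodup := by
    rw [Multiset.nodup_iff_count_le_one]
    push_neg
    simp [Nat.lt_iff_add_one_le]
  have hzero : (‖z‖ ^ 4 - 8 * (z ^ 3).re + 18 * ‖z‖ ^ 2 - 27 : ℝ) = 0
      ↔ P.discr = 0 := by
    rw [hPdisc, ← hdisc]
    exact_mod_cast (Complex.ofReal_eq_zero).symm
  rw [hcount, hzero, ← hnodup]
  tauto
end
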